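/- Let ϱ(X) = Σ_{j=0}^k α_j X^j be a real polynomial of degree k with α_k = 1, satisfying ϱ(1) = 0 and ϱ'(1) > 0, and suppose ϱ has no complex root of modulus greater than 1. Let σ(X) = Σ_{j=0}^{k-1} β_j X^j be a real polynomial with σ(1) = ϱ'(1). Then for every real μ > 0, the polynomial P_μ(X) = ϱ(X) − μ σ(X) has a real root in the open interval (1, ∞). -/

import Mathlib

open Polynomial

/-- if ϱ is a monic real polynomial of degree k with ϱ(1)=0, ϱ'(1)>0, all
complex roots in the closed unit disk, and σ has degree < k with σ(1)=ϱ'(1), then for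
every μ>0 the polynomial ϱ - μσ has a real root in (1,∞). -/
theorem stmt0 (k : ℕ) (hk : 1 ≤ k) (ρ σ : Polynomial ℝ)
    (hmon : ρ.Monic) (hdeg : ρ.natDegree = k)
    (hρ1 : ρ.eval 1 = 0) (hρ'1 : 0 < ρ.derivative.eval 1)
    (hroots : ∀ z : ℂ, (ρ.map (algebraMap ℝ ℂ)).IsRoot z → ‖z‖ ≤ 1)
    (hσdeg : σ.degree < k) (hσ1 : σ.eval 1 = ρ.derivative.eval 1) :
    ∀ μ : ℝ, 0 < μ → ∃ x : ℝ, 1 < x ∧ (ρ - Polynomial.C μ * σ).eval x = 0 := by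
  intro μ hμ
  set P : Polynomial ℝ := ρ - C μ * σ with hP
  have hdlt : (-(C μ * σ)).degree < ρ.degree := by
    rw [degree_neg]
    calc (C μ * σ).degree ≤ (C μ).degree + σ.degree := degree_mul_le _ _
      _ ≤ 0 + σ.degree := add_le_add_left degree_C_le _
      _ = σ.degree := zero_add _
      _ < (k : ℕ) := hσdeg
      _ = ρ.degree := by rw [degree_eq_natDegree hmon.ne_zero, hdeg]
  have hPm : P.Monic := by
    have := hmon.add_of_left hdlt
    simpa [hP, sub_eq_add_neg] using this
  have hP1 : P.eval 1 < 0 := by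
    simp only [hP, eval_sub, eval_mul, eval_C, hρ1, hσ1, zero_sub, neg_lt_zero]
    exact mul_pos hμ hρ'1
  have hPdeg : 0 < P.degree := by
    have hPd : P.degree = ρ.degree := by
      rw [hP, sub_eq_add_neg, degree_add_eq_left_of_degree_lt hdlt]
    rw [hPd, degree_eq_natDegree hmon.ne_zero, hdeg]
    exact_mod_cast hk
  have htend : Filter.Tendsto (fun x => P.eval x) Filter.atTop Filter.atTop :=
    P.tendsto_atTop_of_leadingCoeff_nonneg hPdeg (by rw [hPm.leadingCoeff]; norm_num)
  obtain ⟨b, hb⟩ := (htend.eventually_gt_atTop 0).exists_forall_of_atTop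
  set x := max b 2 with hx
  have hx1 : (1:ℝ) < x := lt_of_lt_of_le one_lt_two (le_max_right _ _)
  have hxpos : 0 < P.eval x := hb x (le_max_left _ _)
  have hcont : ContinuousOn (fun t => P.eval t) (Set.Icc 1 x) :=
    (P.continuous_aeval).continuousOn
  obtain ⟨c, hc, hceq⟩ := intermediate_value_Ioo (le_of_lt hx1) hcont
    (Set.mem_Ioo.mpr ⟨hP1, hxpos⟩)
  exact ⟨c, hc.1, hceq⟩
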